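/- Let (Ω, μ) be a probability space on a standard Borel space, Y₀, Y₁ : Ω → ℝ bounded measurable random variables, and D, T : Ω → {0,1} measurable. Assume the pair (Y₀, Y₁) is conditionally independent of D given the σ-algebra generated by T. Let Y := Y₁·1{D = 1} + Y₀·1{D = 0}. Fix t ∈ {0,1} and suppose μ(D = 1, T = t) > 0, μ(D = 0, T = t) > 0, and μ(T = t) > 0. Then E[Y·1{D = 1, T = t}]/μ(D = 1, T = t) − E[Y·1{D = 0, T = t}]/μ(D = 0, T = t) = E[(Y₁ − Y₀)·1{T = t}]/μ(T = t). -/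

import Mathlib

open MeasureTheory ProbabilityTheory

lemma aux_comap_const {Ω β : Type*} [MeasurableSpace Ω] {T : Ω → β}
    {g : Ω → ℝ} (hg : Measurable[MeasurableSpace.comap T ⊤] g)
    {ω ω' : Ω} (h : T ω = T ω') : g ω = g ω' := by
  obtain ⟨s, -, hs⟩ := hg (measurableSet_singleton (g ω))
  have hω : ω ∈ T ⁻¹' s := by rw [hs]; exact rfl
  have hω' : ω' ∈ T ⁻¹' s := by simpa [Set.mem_preimage, ← h] using hω
  rw [hs] at hω'
  exact hω'.symm

lemma aux_indep_cond {Ω : Type*} [MeasurableSpace Ω] [StandardBorelSpace Ω] [Nonempty Ω]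
    (μ : Measure Ω) [IsProbabilityMeasure μ]
    {X : Ω → ℝ × ℝ} {D T : Ω → Fin 2} (hX : Measurable X) (hD : Measurable D)
    (hT : Measurable T)
    (hCI : CondIndepFun (MeasurableSpace.comap T ⊤) hT.comap_le X D μ)
    (t : Fin 2) (ht : μ (T ⁻¹' {t}) ≠ 0) :
    IndepFun X D (μ[|T ⁻¹' {t}]) := by
  have hm : MeasurableSpace.comap T ⊤ ≤ ‹MeasurableSpace Ω› := hT.comap_le
  set S := T ⁻¹' {t} with hSdef
  have hSm' : MeasurableSet[MeasurableSpace.comap T ⊤] S := ⟨{t}, trivial, rfl⟩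
  have hS : MeasurableSet S := hT (measurableSet_singleton t)
  rw [indepFun_iff_measure_inter_preimage_eq_mul]
  intro s u hs hu
  set A := X ⁻¹' s with hAdef
  set B := D ⁻¹' u with hBdef
  have hA : MeasurableSet A := hX hs
  have hB : MeasurableSet B := hD hu
  have h := (condIndepFun_iff_condExp_inter_preimage_eq_mul hX hD).mp hCI s u hs hu
  obtain ⟨ω₀, hω₀⟩ : S.Nonempty := nonempty_of_measure_ne_zero ht
  set f := (μ⟦A | MeasurableSpace.comap T ⊤⟧) with hf
  set g := (μ⟦B | MeasurableSpace.comap T ⊤⟧) with hgdef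
  have hgm : Measurable[MeasurableSpace.comap T ⊤] g := stronglyMeasurable_condExp.measurable
  have hgconst : ∀ ω ∈ S, g ω = g ω₀ := fun ω hω =>
    aux_comap_const hgm (by
      rw [hSdef, Set.mem_preimage, Set.mem_singleton_iff] at hω hω₀; rw [hω, hω₀])
  have hIndInt : ∀ (E : Set Ω), MeasurableSet E →
      Integrable (E.indicator (fun _ => (1:ℝ))) μ := fun E hE =>
    (integrable_const (1:ℝ)).indicator hE
  have hint_set : ∀ (E : Set Ω), MeasurableSet E →
      ∫ x in S, E.indicator (fun _ => (1:ℝ)) x ∂μ = (μ (E ∩ S)).toReal := by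
    intro E hE
    rw [setIntegral_indicator hE]
    simp [Measure.restrict_apply hE, Set.inter_comm, Measure.real]
  have hL : ∫ x in S, (μ⟦A ∩ B | MeasurableSpace.comap T ⊤⟧) x ∂μ = (μ (A ∩ B ∩ S)).toReal := by
    rw [setIntegral_condExp hm (hIndInt _ (hA.inter hB)) hSm']
    exact hint_set _ (hA.inter hB)
  have hfA : ∫ x in S, f x ∂μ = (μ (A ∩ S)).toReal := by
    rw [hf, setIntegral_condExp hm (hIndInt _ hA) hSm']
    exact hint_set _ hA
  have hgB : ∫ x in S, g x ∂μ = (μ (B ∩ S)).toReal := by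
    rw [hgdef, setIntegral_condExp hm (hIndInt _ hB) hSm']
    exact hint_set _ hB
  have hc : ∫ x in S, g x ∂μ = g ω₀ * (μ S).toReal := by
    rw [setIntegral_congr_fun hS (g := fun _ => g ω₀) (fun ω hω => hgconst ω hω)]
    simp [mul_comm, Measure.real]
  have hgB' : g ω₀ * (μ S).toReal = (μ (B ∩ S)).toReal := hc.symm.trans hgB
  have hRL : ∫ x in S, (μ⟦A ∩ B | MeasurableSpace.comap T ⊤⟧) x ∂μ = ∫ x in S, f x * g x ∂μ :=
    setIntegral_congr_ae hS (h.mono (fun ω hω _ => hω))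
  have hR : ∫ x in S, f x * g x ∂μ = (μ (A ∩ S)).toReal * g ω₀ := by
    rw [setIntegral_congr_fun hS (g := fun x => f x * g ω₀)
      (fun ω hω => by rw [hgconst ω hω]), integral_mul_const, hfA]
  have key : (μ (A ∩ B ∩ S)).toReal * (μ S).toReal
      = (μ (A ∩ S)).toReal * (μ (B ∩ S)).toReal := by
    rw [← hL, hRL, hR, mul_assoc, hgB']
  have hμS : (μ S).toReal ≠ 0 := by
    simp [ENNReal.toReal_ne_zero, ht, measure_ne_top]
  have hfin : ∀ E : Set Ω, (μ S)⁻¹ * μ (S ∩ E) ≠ ⊤ := fun E =>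
    ENNReal.mul_ne_top (ENNReal.inv_ne_top.2 ht) (measure_ne_top _ _)
  rw [cond_apply hS, cond_apply hS, cond_apply hS]
  refine (ENNReal.toReal_eq_toReal_iff' (hfin _) (ENNReal.mul_ne_top (hfin _) (hfin _))).mp ?_
  rw [ENNReal.toReal_mul, ENNReal.toReal_mul, ENNReal.toReal_mul, ENNReal.toReal_mul,
    ENNReal.toReal_inv]
  have h1 : S ∩ (A ∩ B) = A ∩ B ∩ S := by rw [Set.inter_comm]
  have h2 : S ∩ A = A ∩ S := Set.inter_comm _ _
  have h3 : S ∩ B = B ∩ S := Set.inter_comm _ _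
  rw [h1, h2, h3]
  field_simp
  linear_combination key

lemma aux_integrable {Ω : Type*} [MeasurableSpace Ω] (ν : Measure Ω) [IsFiniteMeasure ν]
    {f : Ω → ℝ} (hf : Measurable f) {C : ℝ} (hb : ∀ ω, |f ω| ≤ C) : Integrable f ν :=
  ⟨hf.aestronglyMeasurable,
    HasFiniteIntegral.of_bounded (Filter.Eventually.of_forall fun ω => by simpa using hb ω)⟩

/-- In a strictly strategy-proof RCT (unconfoundedness of `(Y₀,Y₁)`
and `D` given `T`), the difference of conditional means of the observed outcome
identifies the conditional average treatment effect given the preference type: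
`E[Y | D=1, T=t] - E[Y | D=0, T=t] = E[(Y₁-Y₀) 1{T=t}] / P(T=t)`. -/
theorem stmt_12 {Ω : Type*} [MeasurableSpace Ω] [StandardBorelSpace Ω] [Nonempty Ω]
    (μ : Measure Ω) [IsProbabilityMeasure μ]
    (Y0 Y1 : Ω → ℝ) (hY0m : Measurable Y0) (hY1m : Measurable Y1)
    (M : ℝ) (hY0b : ∀ ω, |Y0 ω| ≤ M) (hY1b : ∀ ω, |Y1 ω| ≤ M)
    (D T : Ω → Fin 2) (hD : Measurable D) (hT : Measurable T)
    (hCI : CondIndepFun (MeasurableSpace.comap T ⊤) hT.comap_le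
      (fun ω => (Y0 ω, Y1 ω)) D μ)
    (Y : Ω → ℝ)
    (hY : ∀ ω, Y ω = Y1 ω * (if D ω = 1 then 1 else 0) + Y0 ω * (if D ω = 0 then 1 else 0))
    (t : Fin 2)
    (h1t : 0 < μ {ω | D ω = 1 ∧ T ω = t})
    (h0t : 0 < μ {ω | D ω = 0 ∧ T ω = t})
    (ht : 0 < μ {ω | T ω = t}) :
    (∫ ω, Y ω * (if D ω = 1 ∧ T ω = t then 1 else 0) ∂μ) / (μ {ω | D ω = 1 ∧ T ω = t}).toReal
      - (∫ ω, Y ω * (if D ω = 0 ∧ T ω = t then 1 else 0) ∂μ) / (μ {ω | D ω = 0 ∧ T ω = t}).toReal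
      = (∫ ω, (Y1 ω - Y0 ω) * (if T ω = t then 1 else 0) ∂μ) / (μ {ω | T ω = t}).toReal := by
  classical
  have hfin2 : ∀ x : Fin 2, x = 0 ∨ x = 1 := by decide
  have hSeq : {ω | T ω = t} = T ⁻¹' {t} := rfl
  set S := T ⁻¹' ({t} : Set (Fin 2)) with hSdef
  have hS : MeasurableSet S := hT (measurableSet_singleton t)
  have htS : μ S ≠ 0 := by rw [← hSeq]; exact ht.ne'
  have hμS0 : (μ S).toReal ≠ 0 := by
    simp [ENNReal.toReal_ne_zero, htS, measure_ne_top]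
  set ν := μ[|S] with hνdef
  have hν : IsProbabilityMeasure ν := cond_isProbabilityMeasure htS
  have hXm : Measurable fun ω => (Y0 ω, Y1 ω) := hY0m.prodMk hY1m
  have hI : IndepFun (fun ω => (Y0 ω, Y1 ω)) D ν := aux_indep_cond μ hXm hD hT hCI t htS
  have hI1 : IndepFun Y1 D ν := hI.comp measurable_snd measurable_id
  have hI0 : IndepFun Y0 D ν := hI.comp measurable_fst measurable_id
  have hM0 : 0 ≤ M := le_trans (abs_nonneg _) (hY1b (Classical.arbitrary Ω))
  -- ν-integral of f equals μ-set-integral over S, normalized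
  have hνint : ∀ f : Ω → ℝ, ∫ ω, f ω ∂ν = (μ S).toReal⁻¹ * ∫ ω in S, f ω ∂μ := by
    intro f
    rw [hνdef, ProbabilityTheory.cond, integral_smul_measure, ENNReal.toReal_inv]
    rfl
  -- set integral over S as integral against indicator
  have hsetint : ∀ f : Ω → ℝ, Measurable f →
      ∫ ω in S, f ω ∂μ = ∫ ω, f ω * (if T ω = t then 1 else 0) ∂μ := by
    intro f hf
    rw [← integral_indicator hS]
    congr 1
    funext ω
    by_cases h : T ω = t
    · simp [Set.indicator, hSdef, h]
    · simp [Set.indicator, hSdef, h]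
  -- measure of D-events under ν
  have hνD : ∀ d : Fin 2, (ν (D ⁻¹' {d})).toReal
      = (μ (S ∩ D ⁻¹' {d})).toReal * (μ S).toReal⁻¹ := by
    intro d
    rw [hνdef, cond_apply hS, ENNReal.toReal_mul, ENNReal.toReal_inv, mul_comm]
  have hDset : ∀ d : Fin 2, {ω | D ω = d ∧ T ω = t} = S ∩ D ⁻¹' {d} := by
    intro d; ext ω; simp [hSdef, and_comm]
  -- product formula
  have hprod : ∀ (Z : Ω → ℝ) (d : Fin 2), Measurable Z → (∀ ω, |Z ω| ≤ M) → IndepFun Z D ν →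
      ∫ ω, Z ω * (if D ω = d then 1 else 0) ∂ν
        = (∫ ω, Z ω ∂ν) * (ν (D ⁻¹' {d})).toReal := by
    intro Z d hZm hZb hZI
    have hχm : Measurable fun ω => if D ω = d then (1:ℝ) else 0 :=
      (measurable_of_countable (fun x : Fin 2 => if x = d then (1:ℝ) else 0)).comp hD
    have hχ : IndepFun Z (fun ω => if D ω = d then (1:ℝ) else 0) ν :=
      hZI.comp measurable_id (measurable_of_countable (fun x : Fin 2 => if x = d then (1:ℝ) else 0))
    have h1 : Integrable Z ν := aux_integrable ν hZm hZb
    have h2 : Integrable (fun ω => if D ω = d then (1:ℝ) else 0) ν :=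
      aux_integrable ν hχm (C := 1) (fun ω => by split <;> simp)
    have := hχ.integral_mul_eq_mul_integral h1.aestronglyMeasurable h2.aestronglyMeasurable
    have hmul : (Z * fun ω => if D ω = d then (1:ℝ) else 0)
        = fun ω => Z ω * (if D ω = d then 1 else 0) := rfl
    rw [hmul] at this
    rw [this]
    congr 1
    have hind : (fun ω => if D ω = d then (1:ℝ) else 0)
        = (D ⁻¹' {d}).indicator (fun _ => 1) := by
      funext ω; by_cases h : D ω = d <;> simp [Set.indicator, h]
    rw [hind, integral_indicator (hD (measurableSet_singleton d))]
    simp [Measure.real]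
  have hνint' : ∀ f : Ω → ℝ, ∫ ω in S, f ω ∂μ = (μ S).toReal * ∫ ω, f ω ∂ν := by
    intro f; rw [hνint f, ← mul_assoc, mul_inv_cancel₀ hμS0, one_mul]
  -- the key per-treatment identity
  have key : ∀ (Z : Ω → ℝ) (d : Fin 2), Measurable Z → (∀ ω, |Z ω| ≤ M) → IndepFun Z D ν →
      (∀ ω, Y ω * (if D ω = d ∧ T ω = t then 1 else 0)
        = (Z ω * (if D ω = d then 1 else 0)) * (if T ω = t then 1 else 0)) →
      0 < μ {ω | D ω = d ∧ T ω = t} →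
      (∫ ω, Y ω * (if D ω = d ∧ T ω = t then 1 else 0) ∂μ)
          / (μ {ω | D ω = d ∧ T ω = t}).toReal
        = ∫ ω, Z ω ∂ν := by
    intro Z d hZm hZb hZI hpt hpos
    have hZχm : Measurable fun ω => Z ω * (if D ω = d then 1 else 0) :=
      hZm.mul ((measurable_of_countable (fun x : Fin 2 => if x = d then (1:ℝ) else 0)).comp hD)
    have e1 : ∫ ω, Y ω * (if D ω = d ∧ T ω = t then 1 else 0) ∂μ
        = ∫ ω in S, Z ω * (if D ω = d then 1 else 0) ∂μ := by
      rw [hsetint _ hZχm]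
      exact integral_congr_ae (Filter.Eventually.of_forall hpt)
    have hden : (μ {ω | D ω = d ∧ T ω = t}).toReal
        = (ν (D ⁻¹' {d})).toReal * (μ S).toReal := by
      rw [hDset d, hνD d, mul_assoc, inv_mul_cancel₀ hμS0, mul_one]
    have hdne : (μ {ω | D ω = d ∧ T ω = t}).toReal ≠ 0 := by
      simp [ENNReal.toReal_ne_zero, hpos.ne', measure_ne_top]
    have hνdne : (ν (D ⁻¹' {d})).toReal ≠ 0 := by
      intro h0; rw [hden, h0, zero_mul] at hdne; exact hdne rfl
    rw [e1, hνint' _, hprod Z d hZm hZb hZI, hden]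
    field_simp
  -- pointwise identities
  have hpt1 : ∀ ω, Y ω * (if D ω = 1 ∧ T ω = t then 1 else 0)
      = (Y1 ω * (if D ω = 1 then 1 else 0)) * (if T ω = t then 1 else 0) := by
    intro ω
    by_cases h1 : D ω = 1 <;> by_cases h2 : T ω = t <;>
      simp [hY ω, h1, h2, (by decide : (1 : Fin 2) ≠ 0)]
  have hpt0 : ∀ ω, Y ω * (if D ω = 0 ∧ T ω = t then 1 else 0)
      = (Y0 ω * (if D ω = 0 then 1 else 0)) * (if T ω = t then 1 else 0) := by
    intro ω
    by_cases h1 : D ω = 0 <;> by_cases h2 : T ω = t <;>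
      simp [hY ω, h1, h2, (by decide : (0 : Fin 2) ≠ 1)]
  have t1 := key Y1 1 hY1m hY1b hI1 hpt1 h1t
  have t0 := key Y0 0 hY0m hY0b hI0 hpt0 h0t
  rw [t1, t0]
  -- right-hand side
  have hind1 : Integrable (fun ω => Y1 ω * (if T ω = t then 1 else 0)) μ := by
    refine aux_integrable μ ?_ (C := M) ?_
    · exact hY1m.mul ((measurable_of_countable (fun x : Fin 2 => if x = t then (1:ℝ) else 0)).comp hT)
    · intro ω; by_cases h : T ω = t <;> simp [h, abs_nonneg, hY1b ω, hM0]
  have hind0 : Integrable (fun ω => Y0 ω * (if T ω = t then 1 else 0)) μ := by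
    refine aux_integrable μ ?_ (C := M) ?_
    · exact hY0m.mul ((measurable_of_countable (fun x : Fin 2 => if x = t then (1:ℝ) else 0)).comp hT)
    · intro ω; by_cases h : T ω = t <;> simp [h, abs_nonneg, hY0b ω, hM0]
  have hRHS : ∫ ω, (Y1 ω - Y0 ω) * (if T ω = t then 1 else 0) ∂μ
      = (∫ ω in S, Y1 ω ∂μ) - ∫ ω in S, Y0 ω ∂μ := by
    rw [hsetint Y1 hY1m, hsetint Y0 hY0m, ← integral_sub hind1 hind0]
    congr 1; funext ω; ring
  rw [hRHS, hSeq]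
  rw [hνint Y1, hνint Y0]
  field_simp
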